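/- arXiv:2603.07592 — 2 statements merged into one kernel-verified Lean document; each statement's English description precedes it below -/
import Mathlib

section
/- Let m be a positive integer and let a be a real number such that a^k ≠ 1 for every integer k with 1 ≤ k ≤ m. Then the finite sum of Euler's series, ∑_{k=1}^{m} ( ∏_{j=0}^{k-1} (1 − a^{m−j}) ) / (1 − a^k), equals m. -/
lemma euler_telescope (a : ℝ) (m : ℕ) :
    ∑ i ∈ Finset.range m, a ^ (m - i) * ∏ j ∈ Finset.range i, (1 - a ^ (m - j))
      = 1 - ∏ j ∈ Finset.range m, (1 - a ^ (m - j)) := by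
  have h := Finset.sum_range_sub' (fun i => ∏ j ∈ Finset.range i, (1 - a ^ (m - j))) m
  simp only [Finset.prod_range_zero] at h
  rw [← h]
  apply Finset.sum_congr rfl
  intro i _
  rw [Finset.prod_range_succ]
  ring

lemma euler_aux (a : ℝ) : ∀ m : ℕ, (∀ k : ℕ, 1 ≤ k → k ≤ m → a ^ k ≠ 1) →
    ∑ k ∈ Finset.Icc 1 m,
      (∏ j ∈ Finset.range k, (1 - a ^ (m - j))) / (1 - a ^ k) = m := by
  intro m
  induction m with
  | zero => simp
  | succ m ih =>
    intro ha
    have ha' : ∀ k : ℕ, 1 ≤ k → k ≤ m → a ^ k ≠ 1 :=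
      fun k h1 h2 => ha k h1 (h2.trans (Nat.le_succ m))
    have hne : ∀ k : ℕ, 1 ≤ k → k ≤ m + 1 → (1 : ℝ) - a ^ k ≠ 0 :=
      fun k h1 h2 => sub_ne_zero.mpr (Ne.symm (ha k h1 h2))
    rw [Finset.sum_Icc_succ_top (by omega : 1 ≤ m + 1)]
    -- last term
    have hlast : (∏ j ∈ Finset.range (m + 1), (1 - a ^ (m + 1 - j))) / (1 - a ^ (m + 1))
        = ∏ j ∈ Finset.range m, (1 - a ^ (m - j)) := by
      rw [Finset.prod_range_succ']
      simp only [Nat.succ_sub_succ_eq_sub, Nat.sub_zero]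
      rw [mul_div_assoc, div_self (hne (m + 1) (by omega) le_rfl), mul_one]
    rw [hlast]
    -- per-term recurrence
    have hstep : ∀ k ∈ Finset.Icc 1 m,
        (∏ j ∈ Finset.range k, (1 - a ^ (m + 1 - j))) / (1 - a ^ k)
        = (∏ j ∈ Finset.range k, (1 - a ^ (m - j))) / (1 - a ^ k)
          + a ^ (m + 1 - k) * ∏ j ∈ Finset.range (k - 1), (1 - a ^ (m - j)) := by
      intro k hk
      rw [Finset.mem_Icc] at hk
      obtain ⟨hk1, hk2⟩ := hk
      obtain ⟨l, rfl⟩ : ∃ l, k = l + 1 := ⟨k - 1, by omega⟩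
      have hml : m + 1 - (l + 1) = m - l := by omega
      have hexp : a ^ (m - l) * a ^ (l + 1) = a ^ (m + 1) := by
        rw [← pow_add]; congr 1; omega
      have key : ∏ j ∈ Finset.range (l + 1), (1 - a ^ (m + 1 - j))
          = (∏ j ∈ Finset.range (l + 1), (1 - a ^ (m - j)))
            + a ^ (m - l) * (1 - a ^ (l + 1)) * ∏ j ∈ Finset.range l, (1 - a ^ (m - j)) := by
        rw [Finset.prod_range_succ' (fun j => (1 - a ^ (m + 1 - j))),
          Finset.prod_range_succ (fun j => (1 - a ^ (m - j)))]
        simp only [Nat.succ_sub_succ_eq_sub, Nat.sub_zero]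
        have : (1 : ℝ) - a ^ (m + 1) = (1 - a ^ (m - l)) + a ^ (m - l) * (1 - a ^ (l + 1)) := by
          rw [mul_sub, mul_one, hexp]; ring
        rw [this]; ring
      rw [key, add_div, hml, Nat.add_sub_cancel]
      congr 1
      have h0 := hne (l + 1) (by omega) (by omega)
      field_simp
    rw [Finset.sum_congr rfl hstep, Finset.sum_add_distrib, ih ha']
    -- telescoping sum
    have hre : ∑ k ∈ Finset.Icc 1 m,
        a ^ (m + 1 - k) * ∏ j ∈ Finset.range (k - 1), (1 - a ^ (m - j))
        = ∑ i ∈ Finset.range m, a ^ (m - i) * ∏ j ∈ Finset.range i, (1 - a ^ (m - j)) := by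
      rw [← Finset.Ico_add_one_right_eq_Icc, Finset.sum_Ico_eq_sum_range]
      apply Finset.sum_congr (by norm_num)
      intro i _
      have h1 : m + 1 - (1 + i) = m - i := by omega
      have h2 : 1 + i - 1 = i := by omega
      rw [h1, h2]
    rw [hre, euler_telescope]
    push_cast
    ring

/-- Euler's series truncated at `m`: for a positive integer `m` and a real `a`
with `a ^ k ≠ 1` for all `1 ≤ k ≤ m`, the finite sum
`∑_{k=1}^{m} (∏_{j=0}^{k-1} (1 − a^{m−j})) / (1 − a^k)` equals `m`. -/
theorem euler_series_finite_sum (m : ℕ) (hm : 0 < m) (a : ℝ)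
    (ha : ∀ k : ℕ, 1 ≤ k → k ≤ m → a ^ k ≠ 1) :
    ∑ k ∈ Finset.Icc 1 m,
      (∏ j ∈ Finset.range k, (1 - a ^ ((m : ℤ) - (j : ℤ)))) / (1 - a ^ k) = m := by
  have h := euler_aux a m ha
  rw [← h]
  apply Finset.sum_congr rfl
  intro k hk
  rw [Finset.mem_Icc] at hk
  congr 1
  apply Finset.prod_congr rfl
  intro j hj
  rw [Finset.mem_range] at hj
  have hjm : j ≤ m := by omega
  rw [show (m : ℤ) - (j : ℤ) = ((m - j : ℕ) : ℤ) by omega, zpow_natCast]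
end

section
/- Let m be a positive integer and let a be a real number. For every integer k with k ≥ m + 1, the numerator of the k-th term of Euler's series vanishes: ∏_{j=0}^{k-1} (1 − a^{m−j}) = 0. Consequently, if in addition a^k ≠ 1 for every integer k with 1 ≤ k ≤ m, the infinite series ∑_{k=1}^{∞} ( ∏_{j=0}^{k-1} (1 − a^{m−j}) ) / (1 − a^k) converges and its sum equals m. -/
private lemma euler_series_aux (a : ℝ) : ∀ m : ℕ, (∀ k : ℕ, 1 ≤ k → k ≤ m → a ^ k ≠ 1) →
    ∑ k ∈ Finset.range m, (∏ j ∈ Finset.range (k + 1), (1 - a ^ (m - j))) / (1 - a ^ (k + 1))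
      = m := by
  intro m
  induction m with
  | zero => intro _; simp
  | succ m ih =>
    intro h
    have h' : ∀ k : ℕ, 1 ≤ k → k ≤ m → a ^ k ≠ 1 :=
      fun k h1 h2 => h k h1 (Nat.le_succ_of_le h2)
    have hm1 : (1 : ℝ) - a ^ (m + 1) ≠ 0 :=
      sub_ne_zero.mpr (Ne.symm (h (m + 1) (by omega) le_rfl))
    set Q : ℕ → ℝ := fun k => ∏ i ∈ Finset.range k, (1 - a ^ (m - i)) with hQ
    have key : ∀ k, ∏ j ∈ Finset.range (k + 1), (1 - a ^ (m + 1 - j))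
        = Q k * (1 - a ^ (m + 1)) := by
      intro k
      rw [Finset.prod_range_succ']
      simp [hQ, Nat.succ_sub_succ]
    rw [Finset.sum_range_succ]
    have hlast : (∏ j ∈ Finset.range (m + 1), (1 - a ^ (m + 1 - j))) / (1 - a ^ (m + 1))
        = Q m := by
      rw [key, mul_div_assoc, div_self hm1, mul_one]
    rw [hlast]
    have hmain : ∀ k ∈ Finset.range m,
        (∏ j ∈ Finset.range (k + 1), (1 - a ^ (m + 1 - j))) / (1 - a ^ (k + 1))
        = (∏ j ∈ Finset.range (k + 1), (1 - a ^ (m - j))) / (1 - a ^ (k + 1))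
          + (Q k - Q (k + 1)) := by
      intro k hk
      rw [Finset.mem_range] at hk
      have hk1 : (1 : ℝ) - a ^ (k + 1) ≠ 0 :=
        sub_ne_zero.mpr (Ne.symm (h' (k + 1) (by omega) (by omega)))
      have hpow : a ^ (m - k) * a ^ (k + 1) = a ^ (m + 1) := by
        rw [← pow_add]; congr 1; omega
      have hsplit : (1 : ℝ) - a ^ (m + 1)
          = (1 - a ^ (m - k)) + a ^ (m - k) * (1 - a ^ (k + 1)) := by
        linear_combination hpow
      have hQk1 : Q (k + 1) = Q k * (1 - a ^ (m - k)) := Finset.prod_range_succ _ _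
      have hprod : ∏ j ∈ Finset.range (k + 1), (1 - a ^ (m - j))
          = Q k * (1 - a ^ (m - k)) := Finset.prod_range_succ _ _
      rw [key, hsplit, hprod, hQk1]
      field_simp
      ring
    rw [Finset.sum_congr rfl hmain, Finset.sum_add_distrib, ih h',
      Finset.sum_range_sub' Q m]
    have hQ0 : Q 0 = 1 := by simp [hQ]
    rw [hQ0]
    push_cast
    ring

/-- For a positive integer `m` and any real `a`, every term of Euler's series with
index `k ≥ m + 1` has vanishing numerator `∏_{j=0}^{k-1} (1 − a^{m−j}) = 0`;
consequently, if moreover `a ^ k ≠ 1` for all `1 ≤ k ≤ m`, the infinite series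
`∑_{k=1}^{∞} (∏_{j=0}^{k-1} (1 − a^{m−j})) / (1 − a^k)` converges with sum `m`. -/
theorem euler_series_infinite_sum (m : ℕ) (hm : 0 < m) (a : ℝ) :
    (∀ k : ℕ, m + 1 ≤ k →
      ∏ j ∈ Finset.range k, (1 - a ^ ((m : ℤ) - (j : ℤ))) = 0) ∧
    ((∀ k : ℕ, 1 ≤ k → k ≤ m → a ^ k ≠ 1) →
      HasSum (fun k : ℕ =>
        (∏ j ∈ Finset.range (k + 1), (1 - a ^ ((m : ℤ) - (j : ℤ)))) / (1 - a ^ (k + 1)))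
        (m : ℝ)) := by
  have hzero : ∀ k : ℕ, m + 1 ≤ k →
      ∏ j ∈ Finset.range k, (1 - a ^ ((m : ℤ) - (j : ℤ))) = 0 := by
    intro k hk
    apply Finset.prod_eq_zero (Finset.mem_range.mpr (show m < k by omega))
    simp
  refine ⟨hzero, fun h => ?_⟩
  have hvanish : ∀ k : ℕ, k ∉ Finset.range m →
      (∏ j ∈ Finset.range (k + 1), (1 - a ^ ((m : ℤ) - (j : ℤ)))) / (1 - a ^ (k + 1)) = 0 := by
    intro k hk
    rw [Finset.mem_range, not_lt] at hk
    rw [hzero (k + 1) (by omega), zero_div]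
  have hs := hasSum_sum_of_ne_finset_zero (L := SummationFilter.unconditional ℕ) hvanish
  have hcast : ∀ k ∈ Finset.range m,
      (∏ j ∈ Finset.range (k + 1), (1 - a ^ ((m : ℤ) - (j : ℤ)))) / (1 - a ^ (k + 1))
      = (∏ j ∈ Finset.range (k + 1), (1 - a ^ (m - j))) / (1 - a ^ (k + 1)) := by
    intro k hk
    rw [Finset.mem_range] at hk
    congr 1
    refine Finset.prod_congr rfl fun j hj => ?_
    rw [Finset.mem_range] at hj
    congr 1
    rw [show (m : ℤ) - (j : ℤ) = ((m - j : ℕ) : ℤ) by omega, zpow_natCast]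
  rwa [Finset.sum_congr rfl hcast, euler_series_aux a m h] at hs
end
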